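/- Let a strictly normal colax coalgebra datum for the comma 2-comonad on G : 𝒜 ⥤ 𝒳 be given (so C = 𝟭 𝒳, Q = 𝟭 𝒜, ζ¹ and ζ⁰ are identities, and the normality equations hold). Then for all objects X of 𝒳 and A of 𝒜: θ¹⁰⁰_X, θ¹¹⁰_X, θ¹¹¹_X, θ⁰⁰⁰_A, θ⁰⁰¹_A and θ⁰¹¹_A are identity morphisms; ε_{K X} ∘ K(η_X) = 𝟙_{K X}, so that together with G(ε_A) ∘ η_{G A} = 𝟙_{G A} the functor K is left adjoint to G with unit η : 𝟭 𝒳 ⟶ K ⋙ G and counit ε : G ⋙ K ⟶ 𝟭 𝒜; ω_A ∘ χ_A = 𝟙_{H A}, so that χ and ω are mutually inverse natural isomorphisms between H and G; θ¹⁰¹_X = ω_{K X} ∘ η_X; η_{H A} = G(θ⁰¹⁰_A) ∘ χ_A; and ε_A ∘ K(χ_A) ∘ θ⁰¹⁰_A = 𝟙_A. (This is the analysis of Theorem 'strictnormalcolaxcoalgebra'.) -/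
import Mathlib


open CategoryTheory

universe v₁ v₂ u₁ u₂

variable {𝒜 : Type u₁} {𝒳 : Type u₂} [Category.{v₁} 𝒜] [Category.{v₂} 𝒳]

/-- Theorem `strictnormalcolaxcoalgebra` (analysis): a strictly normal colax coalgebra
datum for the comma 2-comonad on `G` (so `C = 𝟭 𝒳`, `Q = 𝟭 𝒜`, `ζ¹`, `ζ⁰` identities and
the normality equations hold) forces the `θ`-components to be identities, exhibits `K` as
a left adjoint of `G` with unit `η` and counit `ε`, makes `χ` and `ω` mutually inverse,
and determines `θ¹⁰¹`, `θ⁰¹⁰` as stated. -/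
theorem strictly_normal_colax_coalgebra_analysis
    (G : 𝒜 ⥤ 𝒳) (K : 𝒳 ⥤ 𝒜) (H : 𝒜 ⥤ 𝒳)
    (η : 𝟭 𝒳 ⟶ K ⋙ G) (χ : H ⟶ G) (ω : G ⟶ H) (ε : G ⋙ K ⟶ 𝟭 𝒜)
    (ζ1 : 𝟭 𝒳 ⟶ 𝟭 𝒳) (ζ0 : 𝟭 𝒜 ⟶ 𝟭 𝒜)
    (θ100 : 𝟭 𝒳 ⟶ 𝟭 𝒳) (θ101 : 𝟭 𝒳 ⟶ K ⋙ H) (θ110 : K ⟶ K) (θ111 : K ⟶ K)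
    (θ000 : H ⟶ H) (θ001 : H ⟶ H) (θ010 : 𝟭 𝒜 ⟶ H ⋙ K) (θ011 : 𝟭 𝒜 ⟶ 𝟭 𝒜)
    -- strict normality: the counits are identities and the normality equations hold
    (hζ1 : ∀ X : 𝒳, ζ1.app X = 𝟙 X)
    (hζ0 : ∀ A : 𝒜, ζ0.app A = 𝟙 A)
    (norm1 : ∀ A : 𝒜, η.app (G.obj A) ≫ G.map (ε.app A) = 𝟙 (G.obj A))
    (norm2 : ∀ A : 𝒜, ω.app A ≫ χ.app A = 𝟙 (G.obj A))
    -- the component equations of a colax coalgebra datum, with `C = 𝟭 𝒳`, `Q = 𝟭 𝒜`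
    (eq1 : ∀ A : 𝒜, ω.app A ≫ χ.app A = η.app (G.obj A) ≫ G.map (ε.app A))
    (eq2 : ∀ A : 𝒜, ω.app A ≫ χ.app A ≫ G.map (ζ0.app A) = ζ1.app (G.obj A))
    (eq3 : ∀ X : 𝒳, θ100.app X ≫ η.app X = η.app X ≫ G.map (θ110.app X))
    (eq4 : ∀ X : 𝒳, θ101.app X ≫ χ.app (K.obj X) = η.app X ≫ G.map (θ111.app X))
    (eq5 : ∀ X : 𝒳, θ101.app X = θ100.app X ≫ η.app X ≫ ω.app (K.obj X))
    (eq6 : ∀ X : 𝒳, θ111.app X = θ110.app X ≫ K.map (η.app X) ≫ ε.app (K.obj X))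
    (eq7 : ∀ A : 𝒜, θ000.app A ≫ η.app (H.obj A) = χ.app A ≫ G.map (θ010.app A))
    (eq8 : ∀ A : 𝒜, θ001.app A ≫ χ.app A = χ.app A ≫ G.map (θ011.app A))
    (eq9 : ∀ A : 𝒜, θ001.app A = θ000.app A ≫ χ.app A ≫ ω.app A)
    (eq10 : ∀ A : 𝒜, θ011.app A = θ010.app A ≫ K.map (χ.app A) ≫ ε.app A)
    (eq11 : ∀ A : 𝒜, θ100.app (G.obj A) ≫ ω.app A = ω.app A ≫ θ000.app A)
    (eq12 : ∀ A : 𝒜, θ110.app (G.obj A) ≫ K.map (ω.app A) = ε.app A ≫ θ010.app A)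
    (eq13 : ∀ A : 𝒜, θ101.app (G.obj A) ≫ H.map (ε.app A) = ω.app A ≫ θ001.app A)
    (eq14 : ∀ A : 𝒜, θ111.app (G.obj A) ≫ ε.app A = ε.app A ≫ θ011.app A)
    (eq15 : ∀ X : 𝒳, θ100.app X ≫ ζ1.app X = 𝟙 X)
    (eq16 : ∀ X : 𝒳, θ110.app X ≫ K.map (ζ1.app X) = 𝟙 (K.obj X))
    (eq17 : ∀ A : 𝒜, θ001.app A ≫ H.map (ζ0.app A) = 𝟙 (H.obj A))
    (eq18 : ∀ A : 𝒜, θ011.app A ≫ ζ0.app A = 𝟙 A)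
    (eq19 : ∀ X : 𝒳, θ100.app X ≫ ζ1.app X = 𝟙 X)
    (eq20 : ∀ X : 𝒳, θ111.app X ≫ ζ0.app (K.obj X) = 𝟙 (K.obj X))
    (eq21 : ∀ A : 𝒜, θ000.app A ≫ ζ1.app (H.obj A) = 𝟙 (H.obj A))
    (eq22 : ∀ A : 𝒜, θ011.app A ≫ ζ0.app A = 𝟙 A)
    (eq24 : ∀ X : 𝒳, θ100.app X ≫ θ101.app X = θ101.app X ≫ θ000.app (K.obj X))
    (eq25 : ∀ X : 𝒳, θ101.app X ≫ H.map (θ110.app X) = θ100.app X ≫ θ101.app X)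
    (eq26 : ∀ X : 𝒳, θ101.app X ≫ H.map (θ111.app X) = θ101.app X ≫ θ001.app (K.obj X))
    (eq27 : ∀ X : 𝒳, θ111.app X ≫ θ110.app X = θ110.app X ≫ θ111.app X)
    (eq28 : ∀ X : 𝒳, θ111.app X ≫ θ111.app X = θ111.app X ≫ θ011.app (K.obj X))
    (eq29 : ∀ X : 𝒳, θ110.app X ≫ K.map (θ100.app X) = θ110.app X ≫ θ110.app X)
    (eq30 : ∀ X : 𝒳, θ110.app X ≫ K.map (θ101.app X) = θ111.app X ≫ θ010.app (K.obj X))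
    (eq31 : ∀ A : 𝒜, θ000.app A ≫ θ000.app A = θ000.app A ≫ θ100.app (H.obj A))
    (eq32 : ∀ A : 𝒜, θ000.app A ≫ θ001.app A = θ001.app A ≫ θ000.app A)
    (eq33 : ∀ A : 𝒜, θ001.app A ≫ H.map (θ010.app A) = θ000.app A ≫ θ101.app (H.obj A))
    (eq34 : ∀ A : 𝒜, θ001.app A ≫ H.map (θ011.app A) = θ001.app A ≫ θ001.app A)
    (eq35 : ∀ A : 𝒜, θ011.app A ≫ θ010.app A = θ010.app A ≫ θ111.app (H.obj A))
    (eq37 : ∀ A : 𝒜, θ010.app A ≫ K.map (θ000.app A) = θ010.app A ≫ θ110.app (H.obj A))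
    (eq38 : ∀ A : 𝒜, θ010.app A ≫ K.map (θ001.app A) = θ011.app A ≫ θ010.app A) :
    -- the θ-components are identities:
    (∀ X : 𝒳, θ100.app X = 𝟙 X) ∧
    (∀ X : 𝒳, θ110.app X = 𝟙 (K.obj X)) ∧
    (∀ X : 𝒳, θ111.app X = 𝟙 (K.obj X)) ∧
    (∀ A : 𝒜, θ000.app A = 𝟙 (H.obj A)) ∧
    (∀ A : 𝒜, θ001.app A = 𝟙 (H.obj A)) ∧
    (∀ A : 𝒜, θ011.app A = 𝟙 A) ∧
    -- the second triangle identity, so that `K ⊣ G` with unit `η` and counit `ε`: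
    (∀ X : 𝒳, K.map (η.app X) ≫ ε.app (K.obj X) = 𝟙 (K.obj X)) ∧
    (∃ adj : K ⊣ G, adj.unit = η ∧ adj.counit = ε) ∧
    -- `χ` and `ω` are mutually inverse natural isomorphisms between `H` and `G`:
    (∀ A : 𝒜, χ.app A ≫ ω.app A = 𝟙 (H.obj A)) ∧
    -- the remaining structure is determined:
    (∀ X : 𝒳, θ101.app X = η.app X ≫ ω.app (K.obj X)) ∧
    (∀ A : 𝒜, η.app (H.obj A) = χ.app A ≫ G.map (θ010.app A)) ∧
    (∀ A : 𝒜, θ010.app A ≫ K.map (χ.app A) ≫ ε.app A = 𝟙 A) := by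

  have h100 : ∀ X : 𝒳, θ100.app X = 𝟙 X := fun X => by
    have := eq15 X; simpa [hζ1] using this
  have h110 : ∀ X : 𝒳, θ110.app X = 𝟙 (K.obj X) := fun X => by
    have := eq16 X; simpa [hζ1] using this
  have h111 : ∀ X : 𝒳, θ111.app X = 𝟙 (K.obj X) := fun X => by
    have := eq20 X; simpa [hζ0] using this
  have h000 : ∀ A : 𝒜, θ000.app A = 𝟙 (H.obj A) := fun A => by
    have := eq21 A; simpa [hζ1] using this
  have h001 : ∀ A : 𝒜, θ001.app A = 𝟙 (H.obj A) := fun A => by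
    have := eq17 A; simpa [hζ0] using this
  have h011 : ∀ A : 𝒜, θ011.app A = 𝟙 A := fun A => by
    have := eq18 A; simpa [hζ0] using this
  have tri : ∀ X : 𝒳, K.map (η.app X) ≫ ε.app (K.obj X) = 𝟙 (K.obj X) := fun X => by
    have := eq6 X; rw [h111, h110] at this; simpa using this.symm
  refine ⟨h100, h110, h111, h000, h001, h011, tri, ?_, ?_, ?_, ?_, ?_⟩
  · refine ⟨Adjunction.mkOfUnitCounit ⟨η, ε, ?_, ?_⟩, rfl, rfl⟩
    · ext X; simpa using tri X
    · ext A; simpa using norm1 A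
  · intro A
    have := eq9 A; rw [h001, h000] at this; simpa using this.symm
  · intro X
    have := eq5 X; rw [h100] at this; simpa using this
  · intro A
    have := eq7 A; rw [h000] at this; simpa using this
  · intro A
    have := eq10 A; rw [h011] at this; exact this.symm
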